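/- arXiv:1604.06341 — 2 statements merged into one kernel-verified Lean document; each statement's English description precedes it below -/
import Mathlib

section
/- Let D be a real Banach space equipped with a partial order making it an ordered vector space with closed generating positive cone D⁺ = {x ∈ D : 0 ≤ x}. Let H be an Archimedean real ordered vector space and let T : D → H be a linear order preserving map (x ≤ y implies T x ≤ T y). Then the kernel of T is a closed linear subspace of D. -/
section Aux

variable {D : Type*} [NormedAddCommGroup D] [NormedSpace ℝ D]
  [PartialOrder D] [CovariantClass D D (· + ·) (· ≤ ·)]

private lemma add_nonneg'' {a b : D} (ha : 0 ≤ a) (hb : 0 ≤ b) : 0 ≤ a + b := by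
  have h1 : a + 0 ≤ a + b := add_le_add_right hb _
  rw [add_zero] at h1
  exact le_trans ha h1

private lemma sum_nonneg'' {f : ℕ → D} (h : ∀ i, 0 ≤ f i) (s : Finset ℕ) :
    0 ≤ ∑ i ∈ s, f i := by
  classical
  induction s using Finset.induction_on with
  | empty => simp
  | @insert a s ha ih =>
      rw [Finset.sum_insert ha]
      exact add_nonneg'' (h a) ih

private lemma hasSum_nonneg' (hclosed : IsClosed {x : D | 0 ≤ x}) {f : ℕ → D} {a : D}
    (hf : HasSum f a) (h : ∀ i, 0 ≤ f i) : 0 ≤ a :=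
  hclosed.mem_of_tendsto hf (Filter.Eventually.of_forall fun s => sum_nonneg'' h s)

/-- Key lemma (Andô / Krein–Šmulian style): a closed generating cone in a Banach space
admits norm-controlled decompositions. -/
private lemma decomp_bound [CompleteSpace D]
    (hsmulD : ∀ (c : ℝ) (x : D), 0 ≤ c → 0 ≤ x → 0 ≤ c • x)
    (hclosed : IsClosed {x : D | 0 ≤ x})
    (hgen : ∀ x : D, ∃ y z : D, 0 ≤ y ∧ 0 ≤ z ∧ x = y - z) :
    ∃ M : ℝ, 0 < M ∧ ∀ x : D, ∃ y z : D,
      0 ≤ y ∧ 0 ≤ z ∧ x = y - z ∧ ‖y‖ ≤ M * ‖x‖ ∧ ‖z‖ ≤ M * ‖x‖ := by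
  classical
  set A : ℕ → Set D :=
    fun n => {x : D | ∃ y z : D, 0 ≤ y ∧ 0 ≤ z ∧ ‖y‖ ≤ (n : ℝ) ∧ ‖z‖ ≤ (n : ℝ) ∧ x = y - z}
    with hA
  have hcover : (⋃ n : ℕ, closure (A n)) = Set.univ := by
    refine Set.eq_univ_of_forall fun x => ?_
    obtain ⟨y, z, hy, hz, hx⟩ := hgen x
    refine Set.mem_iUnion.2 ⟨⌈max ‖y‖ ‖z‖⌉₊, subset_closure ?_⟩
    exact ⟨y, z, hy, hz, le_trans (le_max_left _ _) (Nat.le_ceil _),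
      le_trans (le_max_right _ _) (Nat.le_ceil _), hx⟩
  obtain ⟨N, x₀, hx₀⟩ := nonempty_interior_of_iUnion_of_closed
    (fun n => isClosed_closure) hcover
  have hconv : Convex ℝ (A N) := by
    rintro x₁ ⟨y₁, z₁, hy₁, hz₁, hny₁, hnz₁, rfl⟩ x₂ ⟨y₂, z₂, hy₂, hz₂, hny₂, hnz₂, rfl⟩
      a b ha hb hab
    refine ⟨a • y₁ + b • y₂, a • z₁ + b • z₂,
      add_nonneg'' (hsmulD a y₁ ha hy₁) (hsmulD b y₂ hb hy₂),
      add_nonneg'' (hsmulD a z₁ ha hz₁) (hsmulD b z₂ hb hz₂), ?_, ?_, ?_⟩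
    · calc ‖a • y₁ + b • y₂‖ ≤ ‖a • y₁‖ + ‖b • y₂‖ := norm_add_le _ _
        _ = a * ‖y₁‖ + b * ‖y₂‖ := by
            rw [norm_smul, norm_smul, Real.norm_eq_abs, Real.norm_eq_abs,
              abs_of_nonneg ha, abs_of_nonneg hb]
        _ ≤ a * N + b * N := by
            gcongr
        _ = (N : ℝ) := by rw [← add_mul, hab, one_mul]
    · calc ‖a • z₁ + b • z₂‖ ≤ ‖a • z₁‖ + ‖b • z₂‖ := norm_add_le _ _
        _ = a * ‖z₁‖ + b * ‖z₂‖ := by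
            rw [norm_smul, norm_smul, Real.norm_eq_abs, Real.norm_eq_abs,
              abs_of_nonneg ha, abs_of_nonneg hb]
        _ ≤ a * N + b * N := by
            gcongr
        _ = (N : ℝ) := by rw [← add_mul, hab, one_mul]
    · rw [smul_sub, smul_sub]; abel
  have hsymm : ∀ w, w ∈ A N → -w ∈ A N := by
    rintro w ⟨y, z, hy, hz, hny, hnz, rfl⟩
    exact ⟨z, y, hz, hy, hnz, hny, (neg_sub _ _)⟩
  have hnegx₀ : -x₀ ∈ closure (A N) :=
    map_mem_closure continuous_neg (interior_subset hx₀) fun w hw => hsymm w hw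
  have h0 : (0 : D) ∈ interior (closure (A N)) := by
    have h := (hconv.closure).combo_interior_self_mem_interior hx₀ hnegx₀
      (by norm_num : (0:ℝ) < 1/2) (by norm_num : (0:ℝ) ≤ 1/2) (by norm_num)
    simpa [smul_neg] using h
  obtain ⟨ε, hε, hball⟩ := Metric.mem_nhds_iff.1 (mem_interior_iff_mem_nhds.1 h0)
  -- the one-step approximation
  have step : ∀ (k : ℕ) (r : D), ‖r‖ < ε / 2 ^ k →
      ∃ p : D × D, 0 ≤ p.1 ∧ 0 ≤ p.2 ∧ ‖p.1‖ ≤ (N : ℝ) / 2 ^ k ∧ ‖p.2‖ ≤ (N : ℝ) / 2 ^ k ∧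
        ‖r - (p.1 - p.2)‖ < ε / 2 ^ (k + 1) := by
    intro k r hr
    have h2k : (0:ℝ) < 2 ^ k := by positivity
    have hs : ((2:ℝ) ^ k • r) ∈ Metric.ball (0 : D) ε := by
      rw [Metric.mem_ball, dist_zero_right, norm_smul, Real.norm_eq_abs, abs_of_pos h2k]
      calc (2:ℝ) ^ k * ‖r‖ < 2 ^ k * (ε / 2 ^ k) := mul_lt_mul_of_pos_left hr h2k
        _ = ε := by field_simp
    have hmem := hball hs
    rw [Metric.mem_closure_iff] at hmem
    obtain ⟨b, hb, hdist⟩ := hmem (ε / 2) (by positivity)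
    obtain ⟨y, z, hy, hz, hny, hnz, rfl⟩ := hb
    refine ⟨(((2:ℝ) ^ k)⁻¹ • y, ((2:ℝ) ^ k)⁻¹ • z),
      hsmulD _ _ (by positivity) hy, hsmulD _ _ (by positivity) hz, ?_, ?_, ?_⟩
    · rw [norm_smul, Real.norm_eq_abs, abs_of_pos (by positivity)]
      calc ((2:ℝ) ^ k)⁻¹ * ‖y‖ ≤ ((2:ℝ) ^ k)⁻¹ * N := by gcongr
        _ = (N : ℝ) / 2 ^ k := by rw [inv_mul_eq_div]
    · rw [norm_smul, Real.norm_eq_abs, abs_of_pos (by positivity)]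
      calc ((2:ℝ) ^ k)⁻¹ * ‖z‖ ≤ ((2:ℝ) ^ k)⁻¹ * N := by gcongr
        _ = (N : ℝ) / 2 ^ k := by rw [inv_mul_eq_div]
    · have heq : r - (((2:ℝ) ^ k)⁻¹ • y - ((2:ℝ) ^ k)⁻¹ • z)
          = ((2:ℝ) ^ k)⁻¹ • ((2:ℝ) ^ k • r - (y - z)) := by
        rw [smul_sub, smul_sub, inv_smul_smul₀ (ne_of_gt h2k)]
      have hd : ‖(2:ℝ) ^ k • r - (y - z)‖ < ε / 2 := by
        rw [dist_eq_norm] at hdist; exact hdist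
      rw [heq, norm_smul, Real.norm_eq_abs, abs_of_pos (by positivity)]
      calc ((2:ℝ) ^ k)⁻¹ * ‖(2:ℝ) ^ k • r - (y - z)‖
          < ((2:ℝ) ^ k)⁻¹ * (ε / 2) := by gcongr
        _ = ε / 2 ^ (k + 1) := by rw [pow_succ]; field_simp
  -- make the choice total
  have step' : ∀ (k : ℕ) (r : D), ∃ p : D × D,
      ‖r‖ < ε / 2 ^ k → (0 ≤ p.1 ∧ 0 ≤ p.2 ∧ ‖p.1‖ ≤ (N : ℝ) / 2 ^ k ∧
        ‖p.2‖ ≤ (N : ℝ) / 2 ^ k ∧ ‖r - (p.1 - p.2)‖ < ε / 2 ^ (k + 1)) := by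
    intro k r
    by_cases h : ‖r‖ < ε / 2 ^ k
    · obtain ⟨p, hp⟩ := step k r h
      exact ⟨p, fun _ => hp⟩
    · exact ⟨(0, 0), fun hc => absurd hc h⟩
  choose P hP using step'
  -- every small vector decomposes with bounded pieces
  have key : ∀ x : D, ‖x‖ < ε → ∃ y z : D,
      0 ≤ y ∧ 0 ≤ z ∧ x = y - z ∧ ‖y‖ ≤ 2 * N ∧ ‖z‖ ≤ 2 * N := by
    intro x hx
    set R : ℕ → D := fun k => Nat.rec x (fun k r => r - ((P k r).1 - (P k r).2)) k with hRdef
    have hRsucc : ∀ k, R (k + 1) = R k - ((P k (R k)).1 - (P k (R k)).2) := fun k => rfl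
    have hRnorm : ∀ k, ‖R k‖ < ε / 2 ^ k := by
      intro k
      induction k with
      | zero => show ‖x‖ < ε / 2 ^ 0; simpa using hx
      | succ k ih =>
          have h := (hP k (R k) ih).2.2.2.2
          rw [hRsucc]
          exact h
    set Y : ℕ → D := fun k => (P k (R k)).1 with hYdef
    set Z : ℕ → D := fun k => (P k (R k)).2 with hZdef
    have hY0 : ∀ k, 0 ≤ Y k := fun k => (hP k (R k) (hRnorm k)).1
    have hZ0 : ∀ k, 0 ≤ Z k := fun k => (hP k (R k) (hRnorm k)).2.1
    have hYn : ∀ k, ‖Y k‖ ≤ (N : ℝ) / 2 ^ k := fun k => (hP k (R k) (hRnorm k)).2.2.1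
    have hZn : ∀ k, ‖Z k‖ ≤ (N : ℝ) / 2 ^ k := fun k => (hP k (R k) (hRnorm k)).2.2.2.1
    have hgeo : Summable (fun k : ℕ => (N : ℝ) * (1/2) ^ k) :=
      (summable_geometric_of_lt_one (by norm_num) (by norm_num)).mul_left _
    have hbY : ∀ k, ‖Y k‖ ≤ (N : ℝ) * (1/2) ^ k := by
      intro k
      calc ‖Y k‖ ≤ (N : ℝ) / 2 ^ k := hYn k
        _ = (N : ℝ) * (1/2) ^ k := by rw [one_div, inv_pow, div_eq_mul_inv]
    have hbZ : ∀ k, ‖Z k‖ ≤ (N : ℝ) * (1/2) ^ k := by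
      intro k
      calc ‖Z k‖ ≤ (N : ℝ) / 2 ^ k := hZn k
        _ = (N : ℝ) * (1/2) ^ k := by rw [one_div, inv_pow, div_eq_mul_inv]
    have hsumY : Summable Y := Summable.of_norm_bounded hgeo hbY
    have hsumZ : Summable Z := Summable.of_norm_bounded hgeo hbZ
    have hgsum : HasSum (fun k : ℕ => (N : ℝ) * (1/2) ^ k) ((N : ℝ) * 2) := by
      have h := (hasSum_geometric_of_lt_one (by norm_num : (0:ℝ) ≤ 1/2)
        (by norm_num : (1/2:ℝ) < 1)).mul_left (N : ℝ)
      have h2 : ((1:ℝ) - 1/2)⁻¹ = 2 := by norm_num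
      rwa [h2] at h
    refine ⟨∑' k, Y k, ∑' k, Z k, hasSum_nonneg' hclosed hsumY.hasSum hY0,
      hasSum_nonneg' hclosed hsumZ.hasSum hZ0, ?_, ?_, ?_⟩
    · -- x = ∑ Y - ∑ Z
      have hpartial : ∀ k, ∑ j ∈ Finset.range k, (Y j - Z j) = x - R k := by
        intro k
        induction k with
        | zero => simp [hRdef]
        | succ k ih => rw [Finset.sum_range_succ, ih, hRsucc]; abel
      have hRlim : Filter.Tendsto R Filter.atTop (nhds 0) := by
        have hlim : Filter.Tendsto (fun k : ℕ => ε / 2 ^ k) Filter.atTop (nhds 0) := by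
          have h := (tendsto_pow_atTop_nhds_zero_of_lt_one
            (by norm_num : (0:ℝ) ≤ 1/2) (by norm_num)).const_mul ε
          have heq : (fun k : ℕ => ε * (1/2) ^ k) = fun k : ℕ => ε / 2 ^ k := by
            funext k; rw [one_div, inv_pow, div_eq_mul_inv]
          rw [heq] at h
          simpa using h
        exact squeeze_zero_norm (fun k => (hRnorm k).le) hlim
      have h1 : Filter.Tendsto (fun k => ∑ j ∈ Finset.range k, (Y j - Z j))
          Filter.atTop (nhds ((∑' k, Y k) - ∑' k, Z k)) :=
        (hsumY.hasSum.sub hsumZ.hasSum).tendsto_sum_nat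
      have h2 : Filter.Tendsto (fun k => x - R k) Filter.atTop (nhds (x - 0)) :=
        tendsto_const_nhds.sub hRlim
      have heq : (fun k => ∑ j ∈ Finset.range k, (Y j - Z j)) = fun k => x - R k := by
        funext k; exact hpartial k
      rw [heq] at h1
      have := tendsto_nhds_unique h1 h2
      rw [sub_zero] at this
      exact this.symm
    · calc ‖∑' k, Y k‖ ≤ (N : ℝ) * 2 := tsum_of_norm_bounded hgsum hbY
        _ = 2 * N := by ring
    · calc ‖∑' k, Z k‖ ≤ (N : ℝ) * 2 := tsum_of_norm_bounded hgsum hbZ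
        _ = 2 * N := by ring
  -- scale to get the global bound
  refine ⟨4 * N / ε + 1, by positivity, fun x => ?_⟩
  by_cases hx : x = 0
  · exact ⟨0, 0, le_refl 0, le_refl 0, by simp [hx], by simp [hx], by simp [hx]⟩
  · have hxn : 0 < ‖x‖ := norm_pos_iff.2 hx
    set c : ℝ := ε / (2 * ‖x‖) with hc
    have hc0 : 0 < c := by positivity
    have hcx : ‖c • x‖ < ε := by
      rw [norm_smul, Real.norm_eq_abs, abs_of_pos hc0, hc]
      have h : ε / (2 * ‖x‖) * ‖x‖ = ε / 2 := by field_simp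
      rw [h]; linarith
    obtain ⟨y', z', hy', hz', hxyz, hyn, hzn⟩ := key (c • x) hcx
    have hcinv : c⁻¹ = 2 * ‖x‖ / ε := by rw [hc]; field_simp
    refine ⟨c⁻¹ • y', c⁻¹ • z', hsmulD _ _ (by positivity) hy',
      hsmulD _ _ (by positivity) hz', ?_, ?_, ?_⟩
    · rw [← smul_sub, ← hxyz, inv_smul_smul₀ (ne_of_gt hc0)]
    · rw [norm_smul, Real.norm_eq_abs, abs_of_pos (by positivity)]
      calc c⁻¹ * ‖y'‖ ≤ c⁻¹ * (2 * N) := by gcongr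
        _ = 4 * N / ε * ‖x‖ := by rw [hcinv]; field_simp; ring
        _ ≤ (4 * N / ε + 1) * ‖x‖ := by nlinarith
    · rw [norm_smul, Real.norm_eq_abs, abs_of_pos (by positivity)]
      calc c⁻¹ * ‖z'‖ ≤ c⁻¹ * (2 * N) := by gcongr
        _ = 4 * N / ε * ‖x‖ := by rw [hcinv]; field_simp; ring
        _ ≤ (4 * N / ε + 1) * ‖x‖ := by nlinarith

end Aux

private lemma arch_aux {H : Type*} [AddCommGroup H] [Module ℝ H] [PartialOrder H]
    [CovariantClass H H (· + ·) (· ≤ ·)]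
    (hsmulH : ∀ (c : ℝ) (x : H), 0 ≤ c → 0 ≤ x → 0 ≤ c • x)
    (harch : ∀ a b : H, (∀ n : ℕ, n • a ≤ b) → a ≤ 0)
    {a b : H} (hb : 0 ≤ b) (h : ∀ k : ℕ, (2:ℝ) ^ k • a ≤ b) : a ≤ 0 := by
  apply harch a b
  intro n
  have h2n : (0:ℝ) < 2 ^ n := by positivity
  have hcast : (n : ℝ) ≤ 2 ^ n := by
    exact_mod_cast (Nat.lt_two_pow_self (n := n)).le
  have hc1 : (n : ℝ) / 2 ^ n ≤ 1 := by rw [div_le_one h2n]; exact hcast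
  have hc0 : (0:ℝ) ≤ (n : ℝ) / 2 ^ n := by positivity
  have hmono : ∀ (c : ℝ) (u v : H), 0 ≤ c → u ≤ v → c • u ≤ c • v := by
    intro c u v hcge huv
    have h' := hsmulH c (v - u) hcge (sub_nonneg.2 huv)
    rw [smul_sub] at h'
    exact sub_nonneg.1 h'
  have h1 : ((n : ℝ) / 2 ^ n) • ((2:ℝ) ^ n • a) ≤ ((n : ℝ) / 2 ^ n) • b :=
    hmono _ _ _ hc0 (h n)
  rw [smul_smul, div_mul_cancel₀ _ (ne_of_gt h2n)] at h1
  have h2 : ((n : ℝ) / 2 ^ n) • b ≤ b := by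
    have h' := hsmulH (1 - (n : ℝ) / 2 ^ n) b (by linarith) hb
    rw [sub_smul, one_smul] at h'
    exact sub_nonneg.1 h'
  have h3 : (n : ℝ) • a ≤ b := le_trans h1 h2
  rwa [Nat.cast_smul_eq_nsmul] at h3

/-- The kernel of an order preserving linear map from an ordered Banach space with closed
generating cone into an Archimedean ordered vector space is closed. -/
theorem ker_closed_of_order_preserving
    {D : Type*} [NormedAddCommGroup D] [NormedSpace ℝ D] [CompleteSpace D]
    [PartialOrder D] [CovariantClass D D (· + ·) (· ≤ ·)]
    {H : Type*} [AddCommGroup H] [Module ℝ H] [PartialOrder H]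
    [CovariantClass H H (· + ·) (· ≤ ·)]
    (hsmulD : ∀ (c : ℝ) (x : D), 0 ≤ c → 0 ≤ x → 0 ≤ c • x)
    (hsmulH : ∀ (c : ℝ) (x : H), 0 ≤ c → 0 ≤ x → 0 ≤ c • x)
    (hclosed : IsClosed {x : D | 0 ≤ x})
    (hgen : ∀ x : D, ∃ y z : D, 0 ≤ y ∧ 0 ≤ z ∧ x = y - z)
    (harch : ∀ a b : H, (∀ n : ℕ, n • a ≤ b) → a ≤ 0)
    (T : D →ₗ[ℝ] H) (hmono : ∀ x y : D, x ≤ y → T x ≤ T y) :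
    IsClosed {x : D | T x = 0} := by
  classical
  obtain ⟨M, hM0, hM⟩ := decomp_bound hsmulD hclosed hgen
  apply isClosed_of_closure_subset
  intro x hx
  have hu : ∀ k : ℕ, ∃ u : D, T u = 0 ∧ ‖x - u‖ < (1/4 : ℝ) ^ k := by
    intro k
    rw [Metric.mem_closure_iff] at hx
    obtain ⟨u, hu, hd⟩ := hx ((1/4 : ℝ) ^ k) (by positivity)
    exact ⟨u, hu, by rwa [dist_eq_norm] at hd⟩
  choose u hu0 hud using hu
  choose yk zk hy0 hz0 hyzn hyn hzn using fun k => hM (x - u k)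
  have hquarter : ∀ k : ℕ, (2:ℝ) ^ k * (1/4) ^ k = (1/2) ^ k := by
    intro k; rw [← mul_pow]; norm_num
  have hbndY : ∀ k, ‖(2:ℝ) ^ k • yk k‖ ≤ M * (1/2) ^ k := by
    intro k
    rw [norm_smul, Real.norm_eq_abs, abs_of_pos (by positivity)]
    calc (2:ℝ) ^ k * ‖yk k‖ ≤ (2:ℝ) ^ k * (M * ‖x - u k‖) := by gcongr; exact hyn k
      _ ≤ (2:ℝ) ^ k * (M * (1/4) ^ k) := by gcongr; exact (hud k).le
      _ = M * ((2:ℝ) ^ k * (1/4) ^ k) := by ring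
      _ = M * (1/2) ^ k := by rw [hquarter]
  have hbndZ : ∀ k, ‖(2:ℝ) ^ k • zk k‖ ≤ M * (1/2) ^ k := by
    intro k
    rw [norm_smul, Real.norm_eq_abs, abs_of_pos (by positivity)]
    calc (2:ℝ) ^ k * ‖zk k‖ ≤ (2:ℝ) ^ k * (M * ‖x - u k‖) := by gcongr; exact hzn k
      _ ≤ (2:ℝ) ^ k * (M * (1/4) ^ k) := by gcongr; exact (hud k).le
      _ = M * ((2:ℝ) ^ k * (1/4) ^ k) := by ring
      _ = M * (1/2) ^ k := by rw [hquarter]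
  have hgeo : Summable (fun k : ℕ => M * (1/2) ^ k) :=
    (summable_geometric_of_lt_one (by norm_num) (by norm_num)).mul_left _
  have hsumY : Summable (fun k => (2:ℝ) ^ k • yk k) := Summable.of_norm_bounded hgeo hbndY
  have hsumZ : Summable (fun k => (2:ℝ) ^ k • zk k) := Summable.of_norm_bounded hgeo hbndZ
  set v := ∑' k, (2:ℝ) ^ k • yk k with hv
  set w := ∑' k, (2:ℝ) ^ k • zk k with hw
  have hv0 : 0 ≤ v := hasSum_nonneg' hclosed hsumY.hasSum
    (fun j => hsmulD _ _ (by positivity) (hy0 j))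
  have hw0 : 0 ≤ w := hasSum_nonneg' hclosed hsumZ.hasSum
    (fun j => hsmulD _ _ (by positivity) (hz0 j))
  -- each term is below the total sum
  have hterm : ∀ (f : ℕ → D), Summable f → (∀ j, 0 ≤ f j) → ∀ k, f k ≤ ∑' j, f j := by
    intro f hf hf0 k
    have h1 := hf.hasSum.update k 0
    have h2 : 0 ≤ (0 : D) - f k + ∑' j, f j := by
      apply hasSum_nonneg' hclosed h1
      intro j
      by_cases hj : j = k
      · subst hj; rw [Function.update_self]
      · rw [Function.update_of_ne hj]; exact hf0 j
    rw [zero_sub, neg_add_eq_sub] at h2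
    exact sub_nonneg.1 h2
  have hvk : ∀ k, (2:ℝ) ^ k • yk k ≤ v :=
    hterm _ hsumY (fun j => hsmulD _ _ (by positivity) (hy0 j))
  have hwk : ∀ k, (2:ℝ) ^ k • zk k ≤ w :=
    hterm _ hsumZ (fun j => hsmulD _ _ (by positivity) (hz0 j))
  have hTv0 : 0 ≤ T v := by
    have h := hmono 0 v hv0
    rwa [map_zero] at h
  have hTw0 : 0 ≤ T w := by
    have h := hmono 0 w hw0
    rwa [map_zero] at h
  -- positive side
  have hA : ∀ k, (2:ℝ) ^ k • T x ≤ T v := by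
    intro k
    have hle : (2:ℝ) ^ k • (x - u k) ≤ (2:ℝ) ^ k • yk k := by
      have hzpos := hsmulD ((2:ℝ) ^ k) (zk k) (by positivity) (hz0 k)
      have heq : (2:ℝ) ^ k • yk k - (2:ℝ) ^ k • (x - u k) = (2:ℝ) ^ k • zk k := by
        rw [← smul_sub]
        congr 1
        rw [hyzn k]
        abel
      rw [← heq] at hzpos
      exact sub_nonneg.1 hzpos
    have h := hmono _ _ (le_trans hle (hvk k))
    rwa [map_smul, map_sub, hu0, sub_zero] at h
  have hB : ∀ k, (2:ℝ) ^ k • (-(T x)) ≤ T w := by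
    intro k
    have hle : (2:ℝ) ^ k • (u k - x) ≤ (2:ℝ) ^ k • zk k := by
      have hypos := hsmulD ((2:ℝ) ^ k) (yk k) (by positivity) (hy0 k)
      have heq : (2:ℝ) ^ k • zk k - (2:ℝ) ^ k • (u k - x) = (2:ℝ) ^ k • yk k := by
        rw [← smul_sub]
        congr 1
        have h' := hyzn k
        have : zk k - (u k - x) = (x - u k) + zk k := by abel
        rw [this, h']
        abel
      rw [← heq] at hypos
      exact sub_nonneg.1 hypos
    have h := hmono _ _ (le_trans hle (hwk k))
    rw [map_smul, map_sub, hu0, zero_sub] at h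
    exact h
  have hTx1 : T x ≤ 0 := arch_aux hsmulH harch hTv0 hA
  have hTx2 : -(T x) ≤ 0 := arch_aux hsmulH harch hTw0 hB
  exact le_antisymm hTx1 (neg_nonpos.1 hTx2)
end

section
/- Let G be a σ-compact locally compact (Hausdorff) topological group and let f : G → ℝ be continuous. Then there exists a continuous function w : G → [0, ∞) such that: (i) for every x ∈ G there exists c ≥ 0 with |f(x⁻¹·y)| ≤ c·w(y) for all y ∈ G (i.e., every left translate L_x f lies in the principal ideal of C(G) generated by w); and (ii) for every a ∈ G and every ε > 0 there exists a neighbourhood U of a such that for all x ∈ U and all y ∈ G, |f(x⁻¹·y) − f(a⁻¹·y)| ≤ ε·w(y) (i.e., x ↦ L_x f is continuous with respect to the w-weighted uniform norm). -/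
/-- For a σ-compact locally compact group `G` and a continuous `f : G → ℝ` there is a
continuous weight `w ≥ 0` such that every left translate `L_x f : y ↦ f (x⁻¹ * y)` lies
in the principal ideal of `C(G)` generated by `w`, and `x ↦ L_x f` is continuous with
respect to the `w`-weighted uniform norm. -/
theorem left_translates_in_principal_ideal
    {G : Type*} [Group G] [TopologicalSpace G] [IsTopologicalGroup G]
    [T2Space G] [LocallyCompactSpace G] [SigmaCompactSpace G]
    (f : G → ℝ) (hf : Continuous f) :
    ∃ w : G → ℝ, Continuous w ∧ (∀ y, 0 ≤ w y) ∧
      (∀ x : G, ∃ c : ℝ, 0 ≤ c ∧ ∀ y : G, |f (x⁻¹ * y)| ≤ c * w y) ∧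
      (∀ a : G, ∀ ε : ℝ, 0 < ε → ∃ U ∈ nhds a,
        ∀ x ∈ U, ∀ y : G, |f (x⁻¹ * y) - f (a⁻¹ * y)| ≤ ε * w y) := by
  classical
  set K : CompactExhaustion G := CompactExhaustion.choice G with hK
  -- joint continuity of `(x, y) ↦ |f (x⁻¹ * y)|`
  have hF : Continuous fun p : G × G => |f (p.1⁻¹ * p.2)| :=
    (hf.comp ((continuous_fst.inv).mul continuous_snd)).abs
  -- sup of `|f (x⁻¹ y)|` over `K n × K n`
  set b : ℕ → ℝ := fun n => sSup ((fun p : G × G => |f (p.1⁻¹ * p.2)|) '' (K n ×ˢ K n)) with hb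
  have hbdd : ∀ n, BddAbove ((fun p : G × G => |f (p.1⁻¹ * p.2)|) '' (K n ×ˢ K n)) := fun n =>
    (((K.isCompact n).prod (K.isCompact n)).bddAbove_image hF.continuousOn)
  have hb_nonneg : ∀ n, 0 ≤ b n := fun n =>
    Real.sSup_nonneg (by rintro x ⟨p, -, rfl⟩; exact abs_nonneg _)
  have hb_le : ∀ n, ∀ x ∈ K n, ∀ y ∈ K n, |f (x⁻¹ * y)| ≤ b n := fun n x hx y hy =>
    le_csSup (hbdd n) ⟨(x, y), Set.mk_mem_prod hx hy, rfl⟩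
  have hb_mono : Monotone b := by
    intro m n hmn
    rcases (K m ×ˢ K m).eq_empty_or_nonempty with h | h
    · have : b m = 0 := by rw [hb]; simp [h]
      rw [this]; exact hb_nonneg n
    · exact csSup_le_csSup (hbdd n) (h.image _)
        (Set.image_mono (Set.prod_mono (K.subset hmn) (K.subset hmn)))
  -- the target growth sequence
  set d : ℕ → ℝ := fun n => 1 + ((n : ℝ) + 1) * b (n + 1) with hd
  have hd_mono : Monotone d := by
    intro m n hmn
    have h1 : ((m : ℝ) + 1) ≤ ((n : ℝ) + 1) := by exact_mod_cast Nat.succ_le_succ hmn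
    have h2 : b (m + 1) ≤ b (n + 1) := hb_mono (Nat.succ_le_succ hmn)
    have := mul_le_mul h1 h2 (hb_nonneg _) (by positivity)
    simp only [hd]; linarith
  have hd_one : ∀ n, 1 ≤ d n := fun n => by
    have := mul_nonneg (by positivity : (0:ℝ) ≤ (n : ℝ) + 1) (hb_nonneg (n + 1))
    simp only [hd]; linarith
  set c : ℕ → ℝ := fun m => d (m + 1) - d m with hc
  have hc_nonneg : ∀ m, 0 ≤ c m := fun m => sub_nonneg.2 (hd_mono (Nat.le_succ m))
  -- Urysohn functions
  have hφ : ∀ m : ℕ, ∃ φ : C(G, ℝ), Set.EqOn φ 0 (K m) ∧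
      Set.EqOn φ 1 ((interior (K (m + 1)))ᶜ) ∧ ∀ x, φ x ∈ Set.Icc (0:ℝ) 1 := by
    intro m
    refine exists_continuous_zero_one_of_isClosed ((K.isCompact m).isClosed)
      isOpen_interior.isClosed_compl ?_
    exact Set.disjoint_left.mpr fun x hx hx' => hx' (K.subset_interior_succ m hx)
  choose φ hφ0 hφ1 hφ01 using hφ
  -- the weight
  set w : G → ℝ := fun y => d 0 + ∑ᶠ m, c m * φ m y with hw
  -- local finiteness of the supports
  have hsupp : ∀ m : ℕ, (Function.support fun y => c m * φ m y) ⊆ (K m)ᶜ := by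
    intro m y hy hyK
    exact hy (by simp [hφ0 m hyK])
  have hlf : LocallyFinite fun m : ℕ => Function.support fun y => c m * φ m y := by
    intro y
    refine ⟨interior (K (K.find y + 1)), ?_, ?_⟩
    · exact isOpen_interior.mem_nhds (K.subset_interior_succ _ (K.mem_find y))
    · refine (Set.finite_Iic (K.find y + 1)).subset ?_
      rintro m ⟨z, hz1, hz2⟩
      by_contra h
      have hm : K.find y + 1 ≤ m := le_of_lt (not_le.mp h)
      exact hsupp m hz1 (K.subset hm (interior_subset hz2))
  have hw_cont : Continuous w :=
    continuous_const.add
      (continuous_finsum (fun m => continuous_const.mul (φ m).continuous) hlf)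
  -- key lower bound: `w y ≥ d (K.find y - 1)`
  have hw_ge : ∀ y, d (K.find y - 1) ≤ w y := by
    intro y
    set n := K.find y with hn
    have hsupp' : (Function.support fun m => c m * φ m y) ⊆ ↑(Finset.range (n + 1)) := by
      intro m hm
      simp only [Finset.coe_range, Set.mem_Iio]
      by_contra h
      have hyK : y ∈ K m := K.subset (by omega : n ≤ m) (K.mem_find y)
      exact hm (by simp [hφ0 m hyK])
    have heq : ∑ᶠ m, c m * φ m y = ∑ m ∈ Finset.range (n + 1), c m * φ m y :=
      finsum_eq_sum_of_support_subset _ hsupp'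
    have he : ∑ m ∈ Finset.range (n - 1), c m
        = ∑ m ∈ Finset.range (n - 1), c m * φ m y := by
      refine Finset.sum_congr rfl fun m hm => ?_
      rw [Finset.mem_range] at hm
      have hyK : y ∉ K (m + 1) := by
        rw [K.mem_iff_find_le, ← hn]; omega
      have hy1 : φ m y = 1 := hφ1 m (fun hmem => hyK (interior_subset hmem))
      rw [hy1, mul_one]
    have h1 : ∑ m ∈ Finset.range (n - 1), c m
        ≤ ∑ m ∈ Finset.range (n + 1), c m * φ m y := by
      rw [he]
      exact Finset.sum_le_sum_of_subset_of_nonneg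
        (Finset.range_subset_range.mpr (by omega))
        (fun i _ _ => mul_nonneg (hc_nonneg i) (hφ01 i y).1)
    have ht : ∑ m ∈ Finset.range (n - 1), c m = d (n - 1) - d 0 := by
      simp only [hc]; exact Finset.sum_range_sub d (n - 1)
    have hfin : d (n - 1) - d 0 ≤ ∑ᶠ m, c m * φ m y := by
      rw [heq, ← ht]; exact h1
    simp only [hw]; linarith
  have hw_one : ∀ y, 1 ≤ w y := fun y => le_trans (hd_one _) (hw_ge y)
  have hw_nb : ∀ y, (K.find y : ℝ) * b (K.find y) ≤ w y := by
    intro y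
    rcases Nat.eq_zero_or_pos (K.find y) with h | h
    · rw [h]; simpa using le_trans zero_le_one (hw_one y)
    · obtain ⟨s, hs⟩ := Nat.exists_eq_add_of_le h
      have hs' : K.find y = s + 1 := by omega
      have := hw_ge y
      rw [hs'] at this ⊢
      simp only [Nat.add_sub_cancel, hd] at this
      push_cast
      linarith
  refine ⟨w, hw_cont, fun y => le_trans zero_le_one (hw_one y), ?_, ?_⟩
  · -- every translate is dominated
    intro x
    set M := K.find x with hM
    refine ⟨b M + 1, by linarith [hb_nonneg M], fun y => ?_⟩
    set n := K.find y with hn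
    rcases le_or_gt n M with hnM | hMn
    · have h1 : |f (x⁻¹ * y)| ≤ b M :=
        hb_le M x (K.mem_find x) y (K.subset hnM (K.mem_find y))
      have h2 := hw_one y
      have h5 : (b M + 1) * 1 ≤ (b M + 1) * w y :=
        mul_le_mul_of_nonneg_left h2 (by linarith [hb_nonneg M])
      clear_value w b M
      linarith
    · have hx' : x ∈ K n := K.subset (le_of_lt hMn) (K.mem_find x)
      have h1 : |f (x⁻¹ * y)| ≤ b n := hb_le n x hx' y (K.mem_find y)
      have h2 : b n ≤ (n : ℝ) * b n :=
        le_mul_of_one_le_left (hb_nonneg n)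
          (by exact_mod_cast Nat.one_le_iff_ne_zero.mpr (by omega))
      have h3 := hw_nb y
      have h4 := hw_one y
      rw [← hn] at h3
      have h5 : (0:ℝ) ≤ w y := by linarith
      have h6 : w y * 1 ≤ w y * (b M + 1) :=
        mul_le_mul_of_nonneg_left (by linarith [hb_nonneg M]) h5
      clear_value w b M n
      nlinarith
  · -- continuity of translation in the weighted norm
    intro a ε hε
    obtain ⟨V, hVc, hVmem⟩ := exists_compact_mem_nhds a
    obtain ⟨m₀, hm₀⟩ := K.exists_superset_of_isCompact hVc
    obtain ⟨N₀, hN₀⟩ := exists_nat_ge (2 / ε)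
    set N := max m₀ N₀ with hN
    have hm₀N : m₀ ≤ N := le_max_left _ _
    have hN₀N : N₀ ≤ N := le_max_right _ _
    have hcont : Continuous fun p : G × G => |f (p.1⁻¹ * p.2) - f (a⁻¹ * p.2)| :=
      ((hf.comp ((continuous_fst.inv).mul continuous_snd)).sub
        (hf.comp (continuous_const.mul continuous_snd))).abs
    have hopen : IsOpen {p : G × G | |f (p.1⁻¹ * p.2) - f (a⁻¹ * p.2)| < ε} :=
      isOpen_lt hcont continuous_const
    have hsub : ({a} : Set G) ×ˢ K N ⊆
        {p : G × G | |f (p.1⁻¹ * p.2) - f (a⁻¹ * p.2)| < ε} := by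
      rintro ⟨x, y⟩ ⟨hx, -⟩
      simp only [Set.mem_singleton_iff] at hx
      simp [hx, hε]
    obtain ⟨u, v, hu, hv, hau, hKv, huv⟩ :=
      generalized_tube_lemma isCompact_singleton (K.isCompact N) hopen hsub
    refine ⟨u ∩ V, Filter.inter_mem (hu.mem_nhds (hau rfl)) hVmem, ?_⟩
    intro x hx y
    by_cases hy : y ∈ K N
    · have hmem : (x, y) ∈ u ×ˢ v := ⟨hx.1, hKv hy⟩
      have h1 := huv hmem
      have h2 := hw_one y
      simp only [Set.mem_setOf_eq] at h1
      have h3 : ε * 1 ≤ ε * w y := mul_le_mul_of_nonneg_left h2 hε.le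
      clear_value w
      linarith
    · set n := K.find y with hn
      have hNn : N < n := by
        by_contra h
        exact hy (K.mem_iff_find_le.mpr (by omega))
      have hxKn : x ∈ K n := K.subset (by omega : m₀ ≤ n) (hm₀ hx.2)
      have haKn : a ∈ K n :=
        K.subset (by omega : m₀ ≤ n) (hm₀ (mem_of_mem_nhds hVmem))
      have h1 : |f (x⁻¹ * y)| ≤ b n := hb_le n x hxKn y (K.mem_find y)
      have h2 : |f (a⁻¹ * y)| ≤ b n := hb_le n a haKn y (K.mem_find y)
      have h3 : |f (x⁻¹ * y) - f (a⁻¹ * y)| ≤ 2 * b n := by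
        calc |f (x⁻¹ * y) - f (a⁻¹ * y)| ≤ |f (x⁻¹ * y)| + |f (a⁻¹ * y)| := abs_sub _ _
          _ ≤ 2 * b n := by linarith
      have hcast : (N₀ : ℝ) ≤ (n : ℝ) := by exact_mod_cast (by omega : N₀ ≤ n)
      have h4 : (2 : ℝ) ≤ ε * n := by
        have h5 : (2 : ℝ) / ε ≤ n := le_trans hN₀ hcast
        rw [div_le_iff₀ hε] at h5
        linarith
      have h6 := hw_nb y
      rw [← hn] at h6
      calc |f (x⁻¹ * y) - f (a⁻¹ * y)| ≤ 2 * b n := h3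
        _ ≤ ε * ↑n * b n := mul_le_mul_of_nonneg_right h4 (hb_nonneg n)
        _ = ε * (↑n * b n) := by ring
        _ ≤ ε * w y := mul_le_mul_of_nonneg_left h6 hε.le
end
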